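/- Let n be an integer. Define g_n(Θ,φ) := exp((nφ/2)·k)·exp(−(Θ/2)·j)·exp(−(nφ/2)·k), q_n(Θ,φ) := sin Θ cos(nφ)·i + sin Θ sin(nφ)·j + cos Θ·k, and Ã_φ(Θ,φ) := (n/2)cos Θ·q_n(Θ,φ) − (n/2)·k. Then for all real Θ, φ: g_n(Θ,φ) · Ã_φ(Θ,φ) · g_n(Θ,φ)⁻¹ + g_n(Θ,φ) · ∂_φ( g_n(Θ,φ)⁻¹ ) = (n/2)(−1 + cos Θ)·k. (The dφ-component of the Charap–Duff connection is transformed by g_n into the Dirac-monopole-type Abelian potential A⁺_φ = (n/2)(−1 + cos Θ)·k.) -/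

import Mathlib

open scoped Quaternion

/-- The imaginary unit `i` of the real quaternions. -/
def qi : ℍ[ℝ] := ⟨0, 1, 0, 0⟩

/-- The imaginary unit `j` of the real quaternions. -/
def qj : ℍ[ℝ] := ⟨0, 0, 1, 0⟩

/-- The imaginary unit `k` of the real quaternions. -/
def qk : ℍ[ℝ] := ⟨0, 0, 0, 1⟩

/-- The gauge transformation `g_n(Θ,φ) = exp((nφ/2)k)·exp(−(Θ/2)j)·exp(−(nφ/2)k)`. -/
noncomputable def gaugeG (n : ℤ) (Θ φ : ℝ) : ℍ[ℝ] :=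
  NormedSpace.exp ((n * φ / 2 : ℝ) • qk) * NormedSpace.exp ((-(Θ / 2) : ℝ) • qj) *
    NormedSpace.exp ((-(n * φ / 2) : ℝ) • qk)

/-- The Charap–Duff field `q_n(Θ,φ) = sin Θ cos(nφ)·i + sin Θ sin(nφ)·j + cos Θ·k`. -/
noncomputable def charapDuffQ (n : ℤ) (Θ φ : ℝ) : ℍ[ℝ] :=
  (Real.sin Θ * Real.cos (n * φ)) • qi + (Real.sin Θ * Real.sin (n * φ)) • qj
    + Real.cos Θ • qk

/-- The `dφ`-component `Ã_φ = (n/2)cos Θ·q_n − (n/2)·k` of the Charap–Duff connection. -/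
noncomputable def Aphi (n : ℤ) (Θ φ : ℝ) : ℍ[ℝ] :=
  ((n : ℝ) / 2 * Real.cos Θ) • charapDuffQ n Θ φ - ((n : ℝ) / 2) • qk

/-- A quaternion built from its four components, typed as `ℍ[ℝ]`. -/
def Q (a b c d : ℝ) : ℍ[ℝ] := ⟨a, b, c, d⟩

@[simp] lemma Q_re (a b c d : ℝ) : (Q a b c d).re = a := rfl
@[simp] lemma Q_imI (a b c d : ℝ) : (Q a b c d).imI = b := rfl
@[simp] lemma Q_imJ (a b c d : ℝ) : (Q a b c d).imJ = c := rfl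
@[simp] lemma Q_imK (a b c d : ℝ) : (Q a b c d).imK = d := rfl

lemma qi_eq : qi = Q 0 1 0 0 := rfl
lemma qj_eq : qj = Q 0 0 1 0 := rfl
lemma qk_eq : qk = Q 0 0 0 1 := rfl

lemma norm_qk : ‖qk‖ = 1 := by
  have h1 : Quaternion.normSq qk = 1 := by rw [Quaternion.normSq_def']; simp [qk]
  have h2 := Quaternion.normSq_eq_norm_mul_self qk
  nlinarith [norm_nonneg qk]

lemma norm_qj : ‖qj‖ = 1 := by
  have h1 : Quaternion.normSq qj = 1 := by rw [Quaternion.normSq_def']; simp [qj]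
  have h2 := Quaternion.normSq_eq_norm_mul_self qj
  nlinarith [norm_nonneg qj]

lemma sin_abs_div (t : ℝ) : Real.sin |t| / |t| * t = Real.sin t := by
  rcases lt_trichotomy t 0 with h | h | h
  · rw [abs_of_neg h, Real.sin_neg]
    field_simp [h.ne]
  · simp [h]
  · rw [abs_of_pos h]
    field_simp

lemma exp_smul_qk (t : ℝ) :
    NormedSpace.exp (t • qk) = Q (Real.cos t) 0 0 (Real.sin t) := by
  have hre : (t • qk).re = 0 := by simp [qk_eq]
  rw [Quaternion.exp_of_re_eq_zero _ hre]
  have hn : ‖t • qk‖ = |t| := by rw [norm_smul, norm_qk, Real.norm_eq_abs, mul_one]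
  rw [hn]
  have key := sin_abs_div t
  ext <;>
    simp [qk_eq, Quaternion.re_coe, Quaternion.imI_coe, Quaternion.imJ_coe, Quaternion.imK_coe,
      Real.cos_abs]
  · linarith [key]

lemma exp_smul_qj (t : ℝ) :
    NormedSpace.exp (t • qj) = Q (Real.cos t) 0 (Real.sin t) 0 := by
  have hre : (t • qj).re = 0 := by simp [qj_eq]
  rw [Quaternion.exp_of_re_eq_zero _ hre]
  have hn : ‖t • qj‖ = |t| := by rw [norm_smul, norm_qj, Real.norm_eq_abs, mul_one]
  rw [hn]
  have key := sin_abs_div t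
  ext <;>
    simp [qj_eq, Quaternion.re_coe, Quaternion.imI_coe, Quaternion.imJ_coe, Quaternion.imK_coe,
      Real.cos_abs]
  · linarith [key]

lemma gaugeG_eq (n : ℤ) (Θ φ : ℝ) :
    gaugeG n Θ φ = Q (Real.cos (Θ / 2)) (Real.sin (n * φ) * Real.sin (Θ / 2))
      (-(Real.cos (n * φ) * Real.sin (Θ / 2))) 0 := by
  unfold gaugeG
  rw [exp_smul_qk, exp_smul_qj, exp_smul_qk]
  have hs : Real.sin ((n : ℝ) * φ) =
      2 * Real.sin ((n : ℝ) * φ / 2) * Real.cos ((n : ℝ) * φ / 2) := by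
    have := Real.sin_two_mul ((n : ℝ) * φ / 2)
    rw [show 2 * ((n : ℝ) * φ / 2) = (n : ℝ) * φ by ring] at this
    exact this
  have hc : Real.cos ((n : ℝ) * φ) = 2 * Real.cos ((n : ℝ) * φ / 2) ^ 2 - 1 := by
    have := Real.cos_two_mul ((n : ℝ) * φ / 2)
    rw [show 2 * ((n : ℝ) * φ / 2) = (n : ℝ) * φ by ring] at this
    exact this
  have h1 := Real.sin_sq_add_cos_sq ((n : ℝ) * φ / 2)
  ext <;>
    simp only [Quaternion.re_mul, Quaternion.imI_mul, Quaternion.imJ_mul, Quaternion.imK_mul,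
      Real.cos_neg, Real.sin_neg, hs, hc, Q_re, Q_imI, Q_imJ, Q_imK]
  · linear_combination Real.cos (Θ / 2) * h1
  · ring
  · linear_combination Real.sin (Θ / 2) * h1
  · ring

lemma normSq_gaugeG (n : ℤ) (Θ φ : ℝ) : Quaternion.normSq (gaugeG n Θ φ) = 1 := by
  rw [Quaternion.normSq_def', gaugeG_eq]
  have h1 := Real.sin_sq_add_cos_sq ((n : ℝ) * φ)
  have h2 := Real.sin_sq_add_cos_sq (Θ / 2)
  dsimp
  nlinarith [h1, h2]

lemma gaugeG_inv (n : ℤ) (Θ φ : ℝ) :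
    (gaugeG n Θ φ)⁻¹ = Q (Real.cos (Θ / 2)) (-(Real.sin (n * φ) * Real.sin (Θ / 2)))
      (Real.cos (n * φ) * Real.sin (Θ / 2)) 0 := by
  rw [Quaternion.inv_def, normSq_gaugeG, inv_one, one_smul, gaugeG_eq]
  ext <;> simp

lemma gaugeG_inv_deriv (n : ℤ) (Θ φ : ℝ) :
    deriv (fun t : ℝ => (gaugeG n Θ t)⁻¹) φ
      = Q 0 (-((n : ℝ) * Real.cos (n * φ) * Real.sin (Θ / 2)))
          (-((n : ℝ) * Real.sin (n * φ) * Real.sin (Θ / 2))) 0 := by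
  have hfun : (fun t : ℝ => (gaugeG n Θ t)⁻¹)
      = fun t : ℝ => ((Real.cos (Θ / 2) : ℝ) : ℍ[ℝ])
          + (-(Real.sin ((n : ℝ) * t) * Real.sin (Θ / 2))) • qi
          + (Real.cos ((n : ℝ) * t) * Real.sin (Θ / 2)) • qj := by
    funext t
    rw [gaugeG_inv]
    ext <;> simp [qi_eq, qj_eq]
  rw [hfun]
  have hmul : HasDerivAt (fun t : ℝ => (n : ℝ) * t) (n : ℝ) φ := by
    simpa using (hasDerivAt_id φ).const_mul (n : ℝ)
  have hsin : HasDerivAt (fun t : ℝ => Real.sin ((n : ℝ) * t))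
      (Real.cos ((n : ℝ) * φ) * (n : ℝ)) φ :=
    (Real.hasDerivAt_sin ((n : ℝ) * φ)).comp φ hmul
  have hcos : HasDerivAt (fun t : ℝ => Real.cos ((n : ℝ) * t))
      (-Real.sin ((n : ℝ) * φ) * (n : ℝ)) φ :=
    (Real.hasDerivAt_cos ((n : ℝ) * φ)).comp φ hmul
  have h : HasDerivAt (fun t : ℝ => ((Real.cos (Θ / 2) : ℝ) : ℍ[ℝ])
          + (-(Real.sin ((n : ℝ) * t) * Real.sin (Θ / 2))) • qi
          + (Real.cos ((n : ℝ) * t) * Real.sin (Θ / 2)) • qj)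
      ((0 : ℍ[ℝ]) + (-(Real.cos ((n : ℝ) * φ) * (n : ℝ) * Real.sin (Θ / 2))) • qi
        + (-Real.sin ((n : ℝ) * φ) * (n : ℝ) * Real.sin (Θ / 2)) • qj) φ := by
    exact ((hasDerivAt_const φ _).add
      (((hsin.mul_const (Real.sin (Θ / 2))).neg.smul_const qi))).add
      ((hcos.mul_const (Real.sin (Θ / 2))).smul_const qj)
  rw [h.deriv]
  ext <;>
    simp only [qi_eq, qj_eq, Q_re, Q_imI, Q_imJ, Q_imK, Quaternion.re_add, Quaternion.imI_add, Quaternion.imJ_add,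
      Quaternion.imK_add, Quaternion.re_smul, Quaternion.imI_smul, Quaternion.imJ_smul,
      Quaternion.imK_smul, Quaternion.re_coe, Quaternion.imI_coe, Quaternion.imJ_coe,
      Quaternion.imK_coe, Quaternion.re_zero, Quaternion.imI_zero, Quaternion.imJ_zero,
      Quaternion.imK_zero, smul_eq_mul] <;>
    ring

/-- The `dφ`-component of the Charap–Duff connection is transformed by `g_n` into the
Dirac-monopole-type Abelian potential:
`g_n·Ã_φ·g_n⁻¹ + g_n·∂_φ(g_n⁻¹) = (n/2)(−1 + cos Θ)·k`. -/
theorem gauge_transforms_phi_component (n : ℤ) (Θ φ : ℝ) :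
    gaugeG n Θ φ * Aphi n Θ φ * (gaugeG n Θ φ)⁻¹
      + gaugeG n Θ φ * deriv (fun t : ℝ => (gaugeG n Θ t)⁻¹) φ
    = ((n : ℝ) / 2 * (-1 + Real.cos Θ)) • qk := by
  rw [gaugeG_inv_deriv, gaugeG_inv, gaugeG_eq, Aphi, charapDuffQ]
  have hcos : Real.cos Θ = 2 * Real.cos (Θ / 2) ^ 2 - 1 := by
    have := Real.cos_two_mul (Θ / 2)
    rw [show 2 * (Θ / 2) = Θ by ring] at this
    exact this
  have hsin : Real.sin Θ = 2 * Real.sin (Θ / 2) * Real.cos (Θ / 2) := by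
    have := Real.sin_two_mul (Θ / 2)
    rw [show 2 * (Θ / 2) = Θ by ring] at this
    exact this
  have h1 := Real.sin_sq_add_cos_sq (Θ / 2)
  have h2 := Real.sin_sq_add_cos_sq ((n : ℝ) * φ)
  set N : ℝ := (n : ℝ)
  set s : ℝ := Real.sin (Θ / 2)
  set c : ℝ := Real.cos (Θ / 2)
  set sn : ℝ := Real.sin ((n : ℝ) * φ)
  set cn : ℝ := Real.cos ((n : ℝ) * φ)
  ext <;>
    simp only [hcos, hsin, qi_eq, qj_eq, qk_eq, Q_re, Q_imI, Q_imJ, Q_imK, Quaternion.re_mul, Quaternion.imI_mul,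
      Quaternion.imJ_mul, Quaternion.imK_mul, Quaternion.re_add, Quaternion.imI_add,
      Quaternion.imJ_add, Quaternion.imK_add, Quaternion.re_sub, Quaternion.imI_sub,
      Quaternion.imJ_sub, Quaternion.imK_sub, Quaternion.re_smul, Quaternion.imI_smul,
      Quaternion.imJ_smul, Quaternion.imK_smul, smul_eq_mul]
  · ring
  · linear_combination (N*s*c*cn^3 + N*s*c*sn^2*cn - 2*N*s*c^3*cn^3 - 2*N*s*c^3*sn^2*cn) * h1
      + (N*s*c*cn - 3*N*s*c^3*cn + 2*N*s*c^5*cn) * h2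
  · linear_combination (N*s*c*sn*cn^2 + N*s*c*sn^3 - 2*N*s*c^3*sn*cn^2 - 2*N*s*c^3*sn^3) * h1
      + (N*s*c*sn - 3*N*s*c^3*sn + 2*N*s*c^5*sn) * h2
  · linear_combination (-N*cn^2 - N*sn^2 + 2*N*c^4*cn^2 + 2*N*c^4*sn^2) * h1
      + (-N + N*c^2 + 2*N*c^4 - 2*N*c^6) * h2
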